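/- For every u > 0 and every θ < Φ(u), ∫_0^∞ u e^{−ux} E(e^{θ T_x}) dx = 1 + (θ/(Φ(u) − θ)) · Φ(u)/(μu). -/

import Mathlib

open MeasureTheory ProbabilityTheory Filter Set Topology

noncomputable section

/-- The setup of the paper: a driftless Lévy subordinator `Xp` with Lévy measure `ν`
(finite mean `μ`), an independent initial delay `X0` with the stationary delay
distribution, and the associated inverse subordinators. -/
structure LevyCtx (Ω : Type) [MeasureSpace Ω] where
  ν : Measure ℝ
  μ : ℝ
  Xp : ℝ → Ω → ℝ
  X0 : Ω → ℝ
  prob : IsProbabilityMeasure (ℙ : Measure Ω)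
  nu_supp : ν (Set.Iic 0) = 0
  nu_min_fin : (∫⁻ x, ENNReal.ofReal (min 1 x) ∂ν) ≠ ⊤
  mu_pos : 0 < μ
  mu_eq : ∫⁻ x, ENNReal.ofReal x ∂ν = ENNReal.ofReal μ
  Xp_meas : ∀ t, Measurable (Xp t)
  X0_meas : Measurable X0
  Xp_zero : ∀ ω, Xp 0 ω = 0
  Xp_mono : ∀ᵐ ω : Ω, Monotone fun t => Xp t ω
  Xp_rc : ∀ᵐ ω : Ω, ∀ t : ℝ, ContinuousWithinAt (fun s => Xp s ω) (Set.Ici t) t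
  Xp_top : ∀ᵐ ω : Ω, Tendsto (fun t => Xp t ω) atTop atTop
  Xp_laplace : ∀ u : ℝ, 0 ≤ u → ∀ t : ℝ, 0 ≤ t →
    (∫ ω, Real.exp (-(u * Xp t ω))) = Real.exp (-(t * ∫ x, (1 - Real.exp (-(u * x))) ∂ν))
  Xp_stat : ∀ s t : ℝ, 0 ≤ s → s ≤ t →
    Measure.map (fun ω => Xp t ω - Xp s ω) ℙ = Measure.map (Xp (t - s)) ℙ
  Xp_indep : ∀ (n : ℕ) (t : Fin (n + 1) → ℝ), Monotone t → (∀ i, 0 ≤ t i) →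
    iIndepFun
      (fun (i : Fin n) (ω : Ω) => Xp (t i.succ) ω - Xp (t i.castSucc) ω) ℙ
  X0_pos : ∀ᵐ ω : Ω, 0 < X0 ω
  X0_cdf : ∀ x : ℝ, 0 ≤ x →
    (ℙ {ω | X0 ω ≤ x}).toReal = (1 / μ) * ∫ y in (0:ℝ)..x, (ν (Set.Ioi y)).toReal
  X0_indep : IndepFun X0 (fun ω (t : ℝ) => Xp t ω) ℙ

namespace LevyCtx

variable {Ω : Type} [MeasureSpace Ω] (S : LevyCtx Ω)

/-- The Laplace exponent `Φ(u) = ∫ (1 - e^{-ux}) ν(dx)`. -/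
def Phi (u : ℝ) : ℝ := ∫ x, (1 - Real.exp (-(u * x))) ∂S.ν

/-- The inverse (first passage) process of the delayed subordinator `X = X0 + Xp`. -/
def T (x : ℝ) (ω : Ω) : ℝ := sInf {t : ℝ | 0 ≤ t ∧ x < S.X0 ω + S.Xp t ω}

/-- The inverse (first passage) process of the pure subordinator `Xp`. -/
def Tp (x : ℝ) (ω : Ω) : ℝ := sInf {t : ℝ | 0 ≤ t ∧ x < S.Xp t ω}

/-- The overshoot process `Γ_x = X_{T_x} - x`. -/
def Gshoot (x : ℝ) (ω : Ω) : ℝ := S.X0 ω + S.Xp (S.T x ω) ω - x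

end LevyCtx


open scoped ENNReal NNReal


lemma cexp_hasDerivAt (c t : ℝ) :
    HasDerivAt (fun s => -Real.exp (-(c*s))) (c * Real.exp (-(c*t))) t := by
  have h := (((hasDerivAt_id t).const_mul c).neg).exp.neg
  have h2 : HasDerivAt (fun s => -Real.exp (-(c*s))) (-(Real.exp (-(c*t)) * -(c*1))) t := h
  simpa [mul_comm] using h2

lemma cexp_tendsto (c : ℝ) (hc : 0 < c) :
    Tendsto (fun s => -Real.exp (-(c*s))) atTop (nhds 0) := by
  have h1 : Tendsto (fun s : ℝ => c * s) atTop atTop :=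
    Tendsto.const_mul_atTop hc tendsto_id
  have h2 : Tendsto (fun s : ℝ => Real.exp (-(c*s))) atTop (nhds 0) :=
    Real.tendsto_exp_neg_atTop_nhds_zero.comp h1
  simpa using h2.neg

lemma integrable_cexp_Ioi (c a : ℝ) (hc : 0 < c) :
    IntegrableOn (fun x => c * Real.exp (-(c*x))) (Ioi a) := by
  apply integrableOn_Ioi_deriv_of_nonneg
    ((cexp_hasDerivAt c a).continuousAt.continuousWithinAt)
    (fun x _ => cexp_hasDerivAt c x)
    (fun x _ => by positivity) (cexp_tendsto c hc)

lemma integral_cexp_Ioi (c a : ℝ) (hc : 0 < c) :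
    ∫ x in Ioi a, c * Real.exp (-(c*x)) = Real.exp (-(c*a)) := by
  have h := integral_Ioi_of_hasDerivAt_of_nonneg
    ((cexp_hasDerivAt c a).continuousAt.continuousWithinAt)
    (fun x _ => cexp_hasDerivAt c x)
    (fun x _ => by positivity) (cexp_tendsto c hc)
  simpa using h

lemma lintegral_cexp_Ioi (c a : ℝ) (hc : 0 < c) :
    ∫⁻ x in Ioi a, ENNReal.ofReal (c * Real.exp (-(c*x))) = ENNReal.ofReal (Real.exp (-(c*a))) := by
  rw [← ofReal_integral_eq_lintegral_ofReal (integrable_cexp_Ioi c a hc)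
    (ae_of_all _ fun x => by positivity), integral_cexp_Ioi c a hc]

lemma lintegral_exp_neg_Ioi_zero (a : ℝ) (ha : 0 < a) :
    ∫⁻ t in Ioi (0:ℝ), ENNReal.ofReal (Real.exp (-(a*t))) = ENNReal.ofReal (1/a) := by
  have h := lintegral_cexp_Ioi a 0 ha
  have h2 : ∀ t : ℝ, ENNReal.ofReal (a * Real.exp (-(a*t)))
      = ENNReal.ofReal a * ENNReal.ofReal (Real.exp (-(a*t))) := fun t =>
    ENNReal.ofReal_mul ha.le
  simp only [h2] at h
  rw [lintegral_const_mul _ (by fun_prop)] at h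
  have ha' : ENNReal.ofReal a ≠ 0 := by simp [ha, ha.le]
  have ha'' : ENNReal.ofReal a ≠ ⊤ := ENNReal.ofReal_ne_top
  rw [← ENNReal.eq_div_iff ha' ha''] at h
  rw [h]
  simp only [mul_zero, neg_zero, Real.exp_zero, ENNReal.ofReal_one]
  rw [ENNReal.div_eq_inv_mul, mul_one, ← ENNReal.ofReal_inv_of_pos ha, one_div]

lemma integral_exp_interval (c a b : ℝ) (hc : c ≠ 0) :
    ∫ t in a..b, Real.exp (c*t) = Real.exp (c*b)/c - Real.exp (c*a)/c := by
  have hd : ∀ x ∈ uIcc a b, HasDerivAt (fun t => Real.exp (c*t)/c) (Real.exp (c*x)) x := by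
    intro x _
    have h := (((hasDerivAt_id x).const_mul c).exp).div_const c
    simpa [mul_comm, mul_div_assoc, mul_div_cancel_left₀ _ hc] using h
  rw [intervalIntegral.integral_eq_sub_of_hasDerivAt hd
    ((Real.continuous_exp.comp (continuous_const.mul continuous_id)).intervalIntegrable a b)]

lemma lintegral_exp_Ioo (c b : ℝ) (hc : c ≠ 0) (hb : 0 ≤ b) :
    ∫⁻ t in Ioo (0:ℝ) b, ENNReal.ofReal (Real.exp (c*t))
      = ENNReal.ofReal ((Real.exp (c*b) - 1)/c) := by
  rw [setLIntegral_congr Ioo_ae_eq_Ioc]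
  rw [← ofReal_integral_eq_lintegral_ofReal
    ((by fun_prop : Continuous fun t : ℝ => Real.exp (c*t)).integrableOn_Ioc)
    (ae_of_all _ fun x => (Real.exp_pos _).le)]
  rw [← intervalIntegral.integral_of_le hb, integral_exp_interval c 0 b hc]
  congr 1
  rw [mul_zero, Real.exp_zero]
  ring


lemma indicator_sandwich_ae {c : ℝ} {s : Set ℝ} (h1 : Ioi c ⊆ s) (h2 : s ⊆ Ici c) :
    s.indicator (fun _ => (1:ℝ≥0∞)) =ᵐ[volume] (Ioi c).indicator (fun _ => 1) := by
  have hsub : {x : ℝ | ¬ s.indicator (fun _ => (1:ℝ≥0∞)) x = (Ioi c).indicator (fun _ => 1) x}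
      ⊆ {c} := by
    intro x hx
    simp only [mem_setOf_eq] at hx
    by_contra hxc
    rcases lt_trichotomy x c with h | h | h
    · have hxs : x ∉ s := fun hs => absurd (h2 hs) (not_le.2 h)
      simp [Set.indicator_apply, hxs, not_lt.2 h.le] at hx
    · exact hxc h
    · have hxs : x ∈ s := h1 h
      simp [Set.indicator_apply, hxs, h] at hx
  exact (MeasureTheory.ae_iff).2 (measure_mono_null hsub (by simp))

lemma key_inner (u c : ℝ) (hu : 0 < u) (hc : 0 ≤ c) {s : Set ℝ}
    (h1 : Ioi c ⊆ s) (h2 : s ⊆ Ici c) :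
    ∫⁻ x in Ioi (0:ℝ), ENNReal.ofReal (u * Real.exp (-(u*x))) * s.indicator (fun _ => 1) x
      = ENNReal.ofReal (Real.exp (-(u*c))) := by
  have hae : (fun x => ENNReal.ofReal (u * Real.exp (-(u*x))) * s.indicator (fun _ => 1) x)
      =ᵐ[volume.restrict (Ioi 0)]
      (fun x => ENNReal.ofReal (u * Real.exp (-(u*x))) * (Ioi c).indicator (fun _ => 1) x) := by
    filter_upwards [ae_restrict_of_ae (indicator_sandwich_ae h1 h2)] with x hx
    rw [hx]
  rw [lintegral_congr_ae hae]
  have hind : ∀ x : ℝ, ENNReal.ofReal (u * Real.exp (-(u*x))) * (Ioi c).indicator (fun _ => (1:ℝ≥0∞)) x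
      = (Ioi c).indicator (fun y => ENNReal.ofReal (u * Real.exp (-(u*y)))) x := by
    intro x; by_cases hx : x ∈ Ioi c <;> simp [hx]
  simp only [hind]
  rw [lintegral_indicator measurableSet_Ioi, Measure.restrict_restrict measurableSet_Ioi]
  rw [show Ioi c ∩ Ioi (0:ℝ) = Ioi c from inter_eq_left.2 (Ioi_subset_Ioi hc)]
  exact lintegral_cexp_Ioi u c hu

lemma key_t (θ Tv : ℝ) (hθ : θ ≠ 0) (hT : 0 ≤ Tv) :
    ∫⁻ t in Ioi (0:ℝ), ENNReal.ofReal (Real.exp (θ*t)) * (Iio Tv).indicator (fun _ => 1) t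
      = ENNReal.ofReal ((Real.exp (θ*Tv) - 1)/θ) := by
  have hind : ∀ t : ℝ, ENNReal.ofReal (Real.exp (θ*t)) * (Iio Tv).indicator (fun _ => (1:ℝ≥0∞)) t
      = (Iio Tv).indicator (fun s => ENNReal.ofReal (Real.exp (θ*s))) t := by
    intro t; by_cases ht : t ∈ Iio Tv <;> simp [ht]
  simp only [hind]
  rw [lintegral_indicator measurableSet_Iio, Measure.restrict_restrict measurableSet_Iio]
  rw [Iio_inter_Ioi]
  exact lintegral_exp_Ioo θ Tv hθ hT

section NuLemmas
variable {Ω : Type} [MeasureSpace Ω] (S : LevyCtx Ω)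

lemma LevyCtx.nu_Ioi_ne_top {y : ℝ} (hy : 0 < y) : S.ν (Ioi y) ≠ ⊤ := by
  have hmin : (0:ℝ) < min 1 y := lt_min one_pos hy
  have hb : ENNReal.ofReal (min 1 y) * S.ν (Ioi y) ≤ ∫⁻ x, ENNReal.ofReal (min 1 x) ∂S.ν := by
    calc ENNReal.ofReal (min 1 y) * S.ν (Ioi y)
        = ∫⁻ _ in Ioi y, ENNReal.ofReal (min 1 y) ∂S.ν := (setLIntegral_const _ _).symm
      _ ≤ ∫⁻ x in Ioi y, ENNReal.ofReal (min 1 x) ∂S.ν := by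
          refine setLIntegral_mono (by fun_prop) (fun x hx => ?_)
          exact ENNReal.ofReal_le_ofReal (min_le_min le_rfl (le_of_lt hx))
      _ ≤ ∫⁻ x, ENNReal.ofReal (min 1 x) ∂S.ν := setLIntegral_le_lintegral _ _
  intro htop
  rw [htop, ENNReal.mul_top (by simp [hmin, not_le.2 hmin, hy])] at hb
  exact S.nu_min_fin (top_le_iff.1 hb)

lemma LevyCtx.nu_sigmaFinite : SigmaFinite S.ν := by
  refine ⟨⟨⟨fun n => Iic 0 ∪ Ioi (1/(n+1)), fun _ => trivial, fun n => ?_, ?_⟩⟩⟩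
  · refine lt_of_le_of_lt (measure_union_le _ _) ?_
    rw [S.nu_supp, zero_add]
    exact (S.nu_Ioi_ne_top (by positivity)).lt_top
  · ext x
    simp only [mem_iUnion, mem_univ, iff_true, mem_union, mem_Iic, mem_Ioi]
    rcases le_or_gt x 0 with h | h
    · exact ⟨0, Or.inl h⟩
    · obtain ⟨n, hn⟩ := exists_nat_one_div_lt h
      exact ⟨n, Or.inr hn⟩

lemma LevyCtx.nu_ae_pos : ∀ᵐ x ∂S.ν, 0 < x := by
  have h : {x : ℝ | ¬ 0 < x} = Iic 0 := by ext x; simp [not_lt]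
  rw [ae_iff, h]; exact S.nu_supp

lemma LevyCtx.nu_Ioi_measurable : Measurable fun y : ℝ => S.ν (Ioi y) :=
  Antitone.measurable (fun _ _ hab => measure_mono (Ioi_subset_Ioi hab))

lemma LevyCtx.nu_ne_zero : S.ν (Ioi 0) ≠ 0 := by
  intro h0
  have huniv : S.ν univ = 0 := by
    rw [← Iic_union_Ioi (a := (0:ℝ))]
    exact le_antisymm (le_trans (measure_union_le _ _) (by rw [S.nu_supp, h0]; simp)) zero_le
  have hz : S.ν = 0 := Measure.measure_univ_eq_zero.mp huniv
  have := S.mu_eq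
  rw [hz, lintegral_zero_measure] at this
  exact absurd (ENNReal.ofReal_eq_zero.1 this.symm) (not_le.2 S.mu_pos)

lemma one_sub_exp_bound {u x : ℝ} (hu : 0 ≤ u) (hx : 0 < x) :
    ‖1 - Real.exp (-(u*x))‖ ≤ max 1 u * min 1 x := by
  have hux : 0 ≤ u * x := mul_nonneg hu hx.le
  have he1 : Real.exp (-(u*x)) ≤ 1 := Real.exp_le_one_iff.2 (by linarith)
  have he2 : 1 - u*x ≤ Real.exp (-(u*x)) := by
    have := Real.add_one_le_exp (-(u*x)); linarith
  rw [Real.norm_eq_abs, abs_of_nonneg (by linarith)]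
  rcases le_or_gt x 1 with h | h
  · rw [min_eq_right h]
    calc 1 - Real.exp (-(u*x)) ≤ u * x := by linarith
      _ ≤ max 1 u * x := mul_le_mul_of_nonneg_right (le_max_right 1 u) hx.le
  · rw [min_eq_left h.le]
    have he0 : 0 < Real.exp (-(u*x)) := Real.exp_pos _
    have h1 : 1 - Real.exp (-(u*x)) ≤ 1 := by linarith
    have h2 : (1:ℝ) ≤ max 1 u * 1 := by
      rw [mul_one]; exact le_max_left 1 u
    linarith

lemma LevyCtx.phi_integrand_nonneg {u : ℝ} (hu : 0 ≤ u) :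
    0 ≤ᵐ[S.ν] fun x => 1 - Real.exp (-(u*x)) := by
  filter_upwards [S.nu_ae_pos] with x hx
  have : Real.exp (-(u*x)) ≤ 1 := Real.exp_le_one_iff.2 (by nlinarith)
  simp only [Pi.zero_apply]; linarith

lemma LevyCtx.phi_integrable {u : ℝ} (hu : 0 ≤ u) :
    Integrable (fun x => 1 - Real.exp (-(u*x))) S.ν := by
  constructor
  · exact (by fun_prop : Continuous fun x : ℝ => 1 - Real.exp (-(u*x))).aestronglyMeasurable
  · refine HasFiniteIntegral.mono' (g := fun x => max 1 u * min 1 x) ?_ ?_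
    · rw [hasFiniteIntegral_iff_ofReal (by
        filter_upwards [S.nu_ae_pos] with x hx
        have h0 : 0 ≤ min 1 x := le_min zero_le_one hx.le
        have h1 : (0:ℝ) ≤ max 1 u := le_trans zero_le_one (le_max_left 1 u)
        exact mul_nonneg h1 h0)]
      have heq : ∀ x : ℝ, ENNReal.ofReal (max 1 u * min 1 x)
          = ENNReal.ofReal (max 1 u) * ENNReal.ofReal (min 1 x) := fun x =>
        ENNReal.ofReal_mul (le_trans zero_le_one (le_max_left 1 u))
      simp only [heq]
      rw [lintegral_const_mul _ (by fun_prop)]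
      exact ENNReal.mul_lt_top ENNReal.ofReal_lt_top S.nu_min_fin.lt_top
    · filter_upwards [S.nu_ae_pos] with x hx
      exact one_sub_exp_bound hu hx

lemma LevyCtx.phi_pos {u : ℝ} (hu : 0 < u) : 0 < S.Phi u := by
  rw [LevyCtx.Phi]
  rw [integral_pos_iff_support_of_nonneg_ae (S.phi_integrand_nonneg hu.le) (S.phi_integrable hu.le)]
  refine lt_of_lt_of_le (pos_iff_ne_zero.2 S.nu_ne_zero) (measure_mono ?_)
  intro x hx
  have hx' : Real.exp (-(u*x)) < 1 := by
    rw [Real.exp_lt_one_iff]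
    have : 0 < u * x := mul_pos hu hx
    linarith
  simp only [Function.mem_support]
  intro h
  linarith [sub_eq_zero.1 h]

end NuLemmas

section Transform
variable {Ω : Type} [MeasureSpace Ω] (S : LevyCtx Ω)

lemma LevyCtx.phi_transform {u : ℝ} (hu : 0 < u) :
    ∫⁻ y in Ioi (0:ℝ), ENNReal.ofReal (Real.exp (-(u*y))) * S.ν (Ioi y)
      = ENNReal.ofReal (S.Phi u / u) := by
  haveI := S.nu_sigmaFinite
  set f : ℝ → ℝ → ℝ≥0∞ := fun y z =>
    ENNReal.ofReal (Real.exp (-(u*y))) * (if y < z then 1 else 0) with hf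
  have hfm : AEMeasurable (Function.uncurry f) ((volume.restrict (Ioi 0)).prod S.ν) := by
    apply Measurable.aemeasurable
    exact (by fun_prop : Measurable fun p : ℝ×ℝ => ENNReal.ofReal (Real.exp (-(u*p.1)))).mul
      (Measurable.ite (measurableSet_lt measurable_fst measurable_snd)
        measurable_const measurable_const)
  have step1 : ∀ y : ℝ, ∫⁻ z, f y z ∂S.ν
      = ENNReal.ofReal (Real.exp (-(u*y))) * S.ν (Ioi y) := by
    intro y
    simp only [hf]
    rw [lintegral_const_mul _ (Measurable.ite (measurableSet_lt measurable_const measurable_id')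
      measurable_const measurable_const)]
    congr 1
    have h2 : (fun z => if y < z then (1:ℝ≥0∞) else 0) = (Ioi y).indicator 1 := by
      funext z; simp [Set.indicator_apply, mem_Ioi]
    rw [h2, lintegral_indicator_one measurableSet_Ioi]
  have step2 : ∀ z : ℝ, 0 < z → ∫⁻ y in Ioi (0:ℝ), f y z
      = ENNReal.ofReal ((1/u) * (1 - Real.exp (-(u*z)))) := by
    intro z hz
    have h2 : (fun y => f y z)
        = (Iio z).indicator (fun y => ENNReal.ofReal (Real.exp (-(u*y)))) := by
      funext y; simp [hf, Set.indicator_apply, mem_Iio]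
    rw [h2, lintegral_indicator measurableSet_Iio,
      Measure.restrict_restrict measurableSet_Iio, Iio_inter_Ioi]
    have h3 : ∀ y : ℝ, -(u*y) = (-u)*y := fun y => by ring
    simp only [h3]
    rw [lintegral_exp_Ioo (-u) z (by linarith) hz.le]
    congr 1
    rw [div_neg, eq_comm]
    field_simp
    ring
  calc ∫⁻ y in Ioi (0:ℝ), ENNReal.ofReal (Real.exp (-(u*y))) * S.ν (Ioi y)
      = ∫⁻ y in Ioi (0:ℝ), ∫⁻ z, f y z ∂S.ν := by
        exact (lintegral_congr fun y => step1 y).symm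
    _ = ∫⁻ z, ∫⁻ y in Ioi (0:ℝ), f y z ∂volume ∂S.ν := lintegral_lintegral_swap hfm
    _ = ∫⁻ z, ENNReal.ofReal ((1/u) * (1 - Real.exp (-(u*z)))) ∂S.ν := by
        refine lintegral_congr_ae ?_
        filter_upwards [S.nu_ae_pos] with z hz
        exact step2 z hz
    _ = ENNReal.ofReal (1/u) * ∫⁻ z, ENNReal.ofReal (1 - Real.exp (-(u*z))) ∂S.ν := by
        have : ∀ z : ℝ, ENNReal.ofReal ((1/u) * (1 - Real.exp (-(u*z))))
            = ENNReal.ofReal (1/u) * ENNReal.ofReal (1 - Real.exp (-(u*z))) := fun z =>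
          ENNReal.ofReal_mul (by positivity)
        simp only [this]
        rw [lintegral_const_mul _ (by fun_prop)]
    _ = ENNReal.ofReal (1/u) * ENNReal.ofReal (S.Phi u) := by
        rw [← ofReal_integral_eq_lintegral_ofReal (S.phi_integrable hu.le)
          (S.phi_integrand_nonneg hu.le)]
        rfl
    _ = ENNReal.ofReal (S.Phi u / u) := by
        rw [← ENNReal.ofReal_mul (by positivity)]
        congr 1
        rw [one_div, inv_mul_eq_div]

lemma LevyCtx.mu_layer : ∫⁻ y in Ioi (0:ℝ), S.ν (Ioi y) = ENNReal.ofReal S.μ := by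
  haveI := S.nu_sigmaFinite
  set f : ℝ → ℝ → ℝ≥0∞ := fun y z => if y < z then 1 else 0 with hf
  have hfm : AEMeasurable (Function.uncurry f) ((volume.restrict (Ioi 0)).prod S.ν) :=
    (Measurable.ite (measurableSet_lt measurable_fst measurable_snd)
      measurable_const measurable_const).aemeasurable
  have step1 : ∀ y : ℝ, ∫⁻ z, f y z ∂S.ν = S.ν (Ioi y) := by
    intro y
    have h2 : (fun z => f y z) = (Ioi y).indicator 1 := by
      funext z; simp [hf, Set.indicator_apply, mem_Ioi]
    rw [h2, lintegral_indicator_one measurableSet_Ioi]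
  have step2 : ∀ z : ℝ, ∫⁻ y in Ioi (0:ℝ), f y z = ENNReal.ofReal z := by
    intro z
    have h2 : (fun y => f y z) = (Iio z).indicator 1 := by
      funext y; simp [hf, Set.indicator_apply, mem_Iio]
    rw [h2, lintegral_indicator_one measurableSet_Iio,
      Measure.restrict_apply measurableSet_Iio, Iio_inter_Ioi, Real.volume_Ioo, sub_zero]
  calc ∫⁻ y in Ioi (0:ℝ), S.ν (Ioi y)
      = ∫⁻ y in Ioi (0:ℝ), ∫⁻ z, f y z ∂S.ν := (lintegral_congr fun y => step1 y).symm
    _ = ∫⁻ z, ∫⁻ y in Ioi (0:ℝ), f y z ∂volume ∂S.ν := lintegral_lintegral_swap hfm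
    _ = ∫⁻ z, ENNReal.ofReal z ∂S.ν := lintegral_congr fun z => step2 z
    _ = ENNReal.ofReal S.μ := S.mu_eq

lemma LevyCtx.cdf_lintegral {x : ℝ} (hx : 0 ≤ x) :
    (ℙ : Measure Ω) {ω | S.X0 ω ≤ x}
      = ENNReal.ofReal (1/S.μ) * ∫⁻ y in Ioc (0:ℝ) x, S.ν (Ioi y) := by
  haveI := S.prob
  have h1 : (ℙ : Measure Ω) {ω | S.X0 ω ≤ x}
      = ENNReal.ofReal (((ℙ : Measure Ω) {ω | S.X0 ω ≤ x}).toReal) :=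
    (ENNReal.ofReal_toReal (measure_ne_top _ _)).symm
  rw [h1, S.X0_cdf x hx]
  have hik : IntegrableOn (fun y => (S.ν (Ioi y)).toReal) (Ioc 0 x) := by
    refine ⟨(ENNReal.measurable_toReal.comp S.nu_Ioi_measurable).aestronglyMeasurable, ?_⟩
    rw [hasFiniteIntegral_iff_ofReal (ae_of_all _ fun y => ENNReal.toReal_nonneg)]
    refine lt_of_le_of_lt (lintegral_mono fun y => ENNReal.ofReal_toReal_le) ?_
    refine lt_of_le_of_lt (lintegral_mono_set Ioc_subset_Ioi_self) ?_
    rw [S.mu_layer]; exact ENNReal.ofReal_lt_top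
  rw [ENNReal.ofReal_mul (div_nonneg zero_le_one S.mu_pos.le)]
  congr 1
  rw [intervalIntegral.integral_of_le hx,
    ofReal_integral_eq_lintegral_ofReal hik (ae_of_all _ fun y => ENNReal.toReal_nonneg)]
  refine setLIntegral_congr_fun measurableSet_Ioc (fun y hy => ?_)
  exact ENNReal.ofReal_toReal (S.nu_Ioi_ne_top hy.1)

lemma LevyCtx.inner_cdf_transform {u : ℝ} (hu : 0 < u) :
    ∫⁻ x in Ioi (0:ℝ), ENNReal.ofReal (u * Real.exp (-(u*x)))
        * ∫⁻ y in Ioc (0:ℝ) x, S.ν (Ioi y)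
      = ENNReal.ofReal (S.Phi u / u) := by
  have hIoc : ∀ x : ℝ, ∫⁻ y in Ioc (0:ℝ) x, S.ν (Ioi y)
      = ∫⁻ y in Ioi (0:ℝ), S.ν (Ioi y) * (if y ≤ x then 1 else 0) := by
    intro x
    have h2 : (fun y => S.ν (Ioi y) * (if y ≤ x then (1:ℝ≥0∞) else 0))
        = (Iic x).indicator (fun y => S.ν (Ioi y)) := by
      funext y
      rw [Set.indicator_apply]
      by_cases hy : y ≤ x
      · rw [if_pos hy, if_pos (mem_Iic.2 hy), mul_one]
      · rw [if_neg hy, if_neg (fun h => hy (mem_Iic.1 h)), mul_zero]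
    rw [h2, lintegral_indicator measurableSet_Iic,
      Measure.restrict_restrict measurableSet_Iic, Set.Iic_inter_Ioi]
  simp only [hIoc]
  set g : ℝ → ℝ → ℝ≥0∞ := fun x y =>
    ENNReal.ofReal (u * Real.exp (-(u*x))) * (S.ν (Ioi y) * (if y ≤ x then 1 else 0)) with hg
  have hgm : AEMeasurable (Function.uncurry g)
      ((volume.restrict (Ioi 0)).prod (volume.restrict (Ioi 0))) := by
    apply Measurable.aemeasurable
    refine Measurable.mul (by fun_prop) (Measurable.mul (S.nu_Ioi_measurable.comp measurable_snd) ?_)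
    exact Measurable.ite (measurableSet_le measurable_snd measurable_fst)
      measurable_const measurable_const
  have hswap : ∫⁻ x in Ioi (0:ℝ), ∫⁻ y in Ioi (0:ℝ), g x y ∂volume ∂volume
      = ∫⁻ y in Ioi (0:ℝ), ∫⁻ x in Ioi (0:ℝ), g x y ∂volume ∂volume :=
    lintegral_lintegral_swap hgm
  have hpull : ∀ x : ℝ, ENNReal.ofReal (u * Real.exp (-(u*x)))
      * ∫⁻ y in Ioi (0:ℝ), S.ν (Ioi y) * (if y ≤ x then 1 else 0)
      = ∫⁻ y in Ioi (0:ℝ), g x y := by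
    intro x
    rw [← lintegral_const_mul' _ _ ENNReal.ofReal_ne_top]
  simp only [hpull]
  rw [hswap]
  have hinner : ∀ y : ℝ, 0 < y → ∫⁻ x in Ioi (0:ℝ), g x y
      = S.ν (Ioi y) * ENNReal.ofReal (Real.exp (-(u*y))) := by
    intro y hy
    have h2 : (fun x => g x y) = fun x => S.ν (Ioi y)
        * (ENNReal.ofReal (u * Real.exp (-(u*x))) * (Ici y).indicator (fun _ => 1) x) := by
      funext x
      by_cases hxy : y ≤ x <;>
        simp [hg, Set.indicator_apply, mem_Ici, hxy] <;> ring
    rw [h2, lintegral_const_mul' _ _ (S.nu_Ioi_ne_top hy)]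
    congr 1
    exact key_inner u y hu hy.le Ioi_subset_Ici_self (subset_refl _)
  calc ∫⁻ y in Ioi (0:ℝ), ∫⁻ x in Ioi (0:ℝ), g x y
      = ∫⁻ y in Ioi (0:ℝ), ENNReal.ofReal (Real.exp (-(u*y))) * S.ν (Ioi y) := by
        refine setLIntegral_congr_fun measurableSet_Ioi (fun y hy => ?_)
        rw [hinner y hy, mul_comm]
    _ = ENNReal.ofReal (S.Phi u / u) := S.phi_transform hu

lemma LevyCtx.X0_laplace_lintegral {u : ℝ} (hu : 0 < u) :
    ∫⁻ ω, ENNReal.ofReal (Real.exp (-(u * S.X0 ω))) ∂(ℙ : Measure Ω)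
      = ENNReal.ofReal (S.Phi u / (S.μ * u)) := by
  haveI := S.prob
  set f : Ω → ℝ → ℝ≥0∞ := fun ω x =>
    ENNReal.ofReal (u * Real.exp (-(u*x))) * (if S.X0 ω ≤ x then 1 else 0) with hf
  have hfm : AEMeasurable (Function.uncurry f)
      ((ℙ : Measure Ω).prod (volume.restrict (Ioi 0))) := by
    apply Measurable.aemeasurable
    refine Measurable.mul (by fun_prop) ?_
    exact Measurable.ite (measurableSet_le (S.X0_meas.comp measurable_fst) measurable_snd)
      measurable_const measurable_const
  have step1 : ∀ᵐ ω ∂(ℙ : Measure Ω), ∫⁻ x in Ioi (0:ℝ), f ω x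
      = ENNReal.ofReal (Real.exp (-(u * S.X0 ω))) := by
    filter_upwards [S.X0_pos] with ω hω
    have h2 : (fun x => f ω x) = fun x => ENNReal.ofReal (u * Real.exp (-(u*x)))
        * (Ici (S.X0 ω)).indicator (fun _ => 1) x := by
      funext x; simp [hf, Set.indicator_apply, mem_Ici]
    rw [h2]
    exact key_inner u (S.X0 ω) hu hω.le Ioi_subset_Ici_self (subset_refl _)
  have step2 : ∀ x : ℝ, ∫⁻ ω, f ω x ∂(ℙ : Measure Ω)
      = ENNReal.ofReal (u * Real.exp (-(u*x))) * (ℙ : Measure Ω) {ω | S.X0 ω ≤ x} := by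
    intro x
    rw [lintegral_const_mul _ (Measurable.ite (measurableSet_le S.X0_meas measurable_const)
      measurable_const measurable_const)]
    congr 1
    have h2 : (fun ω => if S.X0 ω ≤ x then (1:ℝ≥0∞) else 0)
        = ({ω | S.X0 ω ≤ x}).indicator 1 := by
      funext ω; simp [Set.indicator_apply]
    rw [h2, lintegral_indicator_one (measurableSet_le S.X0_meas measurable_const)]
  calc ∫⁻ ω, ENNReal.ofReal (Real.exp (-(u * S.X0 ω))) ∂(ℙ : Measure Ω)
      = ∫⁻ ω, (∫⁻ x in Ioi (0:ℝ), f ω x) ∂(ℙ : Measure Ω) := (lintegral_congr_ae step1).symm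
    _ = ∫⁻ x in Ioi (0:ℝ), ∫⁻ ω, f ω x ∂(ℙ : Measure Ω) ∂volume := lintegral_lintegral_swap hfm
    _ = ∫⁻ x in Ioi (0:ℝ), ENNReal.ofReal (u * Real.exp (-(u*x)))
          * (ENNReal.ofReal (1/S.μ) * ∫⁻ y in Ioc (0:ℝ) x, S.ν (Ioi y)) := by
        refine setLIntegral_congr_fun measurableSet_Ioi (fun x hx => ?_)
        rw [step2, S.cdf_lintegral (le_of_lt hx)]
    _ = ENNReal.ofReal (1/S.μ) * ∫⁻ x in Ioi (0:ℝ), ENNReal.ofReal (u * Real.exp (-(u*x)))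
          * ∫⁻ y in Ioc (0:ℝ) x, S.ν (Ioi y) := by
        rw [← lintegral_const_mul' _ _ ENNReal.ofReal_ne_top]
        exact lintegral_congr fun x => by ring
    _ = ENNReal.ofReal (1/S.μ) * ENNReal.ofReal (S.Phi u / u) := by
        rw [S.inner_cdf_transform hu]
    _ = ENNReal.ofReal (S.Phi u / (S.μ * u)) := by
        rw [← ENNReal.ofReal_mul (div_nonneg zero_le_one S.mu_pos.le)]
        congr 1
        field_simp
end Transform

lemma exists_good_of_ae {α : Type*} [MeasurableSpace α] (μ : Measure α) {p : α → Prop}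
    (h : ∀ᵐ ω ∂μ, p ω) : ∃ G, MeasurableSet G ∧ μ Gᶜ = 0 ∧ ∀ ω ∈ G, p ω := by
  rw [MeasureTheory.ae_iff] at h
  refine ⟨(toMeasurable μ {ω | ¬ p ω})ᶜ, (measurableSet_toMeasurable _ _).compl, ?_, ?_⟩
  · rw [compl_compl, measure_toMeasurable]
    exact h
  · intro ω hω
    by_contra hc
    exact hω (subset_toMeasurable _ _ hc)

section TLemmas
variable {Ω : Type} [MeasureSpace Ω] (S : LevyCtx Ω)

lemma LevyCtx.T_nonneg (x : ℝ) (ω : Ω) : 0 ≤ S.T x ω :=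
  Real.sInf_nonneg fun _ ht => ht.1

lemma LevyCtx.T_lt_imp {x t : ℝ} {ω : Ω} (ht : 0 ≤ t) (h : t < S.T x ω) :
    S.X0 ω + S.Xp t ω ≤ x := by
  by_contra hc
  push_neg at hc
  exact absurd (csInf_le ⟨0, fun s hs => hs.1⟩ (mem_setOf_eq ▸ ⟨ht, hc⟩)) (not_le.2 h)

lemma LevyCtx.T_set_nonempty {ω : Ω} (htop : Tendsto (fun t => S.Xp t ω) atTop atTop) (x : ℝ) :
    {t : ℝ | 0 ≤ t ∧ x < S.X0 ω + S.Xp t ω}.Nonempty := by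
  have h := (htop.eventually (eventually_gt_atTop (x - S.X0 ω))).and (eventually_ge_atTop 0)
  obtain ⟨t, ht1, ht2⟩ := h.exists
  exact ⟨t, ht2, by linarith⟩

lemma LevyCtx.lt_T_of {ω : Ω} (hmono : Monotone fun t => S.Xp t ω)
    (hrc : ∀ t : ℝ, ContinuousWithinAt (fun s => S.Xp s ω) (Ici t) t)
    (htop : Tendsto (fun t => S.Xp t ω) atTop atTop)
    {x t : ℝ} (ht : 0 ≤ t) (hx : S.X0 ω + S.Xp t ω < x) : t < S.T x ω := by
  have hmem : (fun s => S.Xp s ω) ⁻¹' (Iio (x - S.X0 ω)) ∈ 𝓝[Ici t] t :=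
    (hrc t) (Iio_mem_nhds (by linarith))
  obtain ⟨v, hv, hsub⟩ := mem_nhdsGE_iff_exists_Ico_subset.1 hmem
  have hvt : t < v := hv
  have hlow : ∀ b ∈ {s : ℝ | 0 ≤ s ∧ x < S.X0 ω + S.Xp s ω}, (t+v)/2 ≤ b := by
    intro b hb
    by_contra hbc
    push_neg at hbc
    rcases le_or_gt b t with h1 | h1
    · have h2 : S.Xp b ω ≤ S.Xp t ω := hmono h1
      have h3 := hb.2
      linarith
    · have hbIco : b ∈ Ico t v := ⟨h1.le, by linarith⟩
      have h2 := hsub hbIco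
      simp only [mem_preimage, mem_Iio] at h2
      have h3 := hb.2
      linarith
  have hge := le_csInf (S.T_set_nonempty htop x) hlow
  have : (t+v)/2 ≤ S.T x ω := hge
  linarith

lemma LevyCtx.T_le_iff {ω : Ω} (hmono : Monotone fun t => S.Xp t ω)
    (htop : Tendsto (fun t => S.Xp t ω) atTop atTop)
    {x c : ℝ} (hc : 0 ≤ c) :
    S.T x ω ≤ c ↔ ∀ q : ℚ, c < (q:ℝ) → x < S.X0 ω + S.Xp (q:ℝ) ω := by
  constructor
  · intro h q hq
    obtain ⟨a, ha, haq⟩ := exists_lt_of_csInf_lt (S.T_set_nonempty htop x)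
      (lt_of_le_of_lt h hq)
    have h2 : S.Xp a ω ≤ S.Xp (q:ℝ) ω := hmono haq.le
    have h3 := ha.2
    linarith
  · intro h
    refine le_of_forall_pos_le_add fun ε hε => ?_
    obtain ⟨q, hq1, hq2⟩ := exists_rat_btwn (lt_add_of_pos_right c hε)
    refine le_trans (csInf_le ⟨0, fun s hs => hs.1⟩ ?_) hq2.le
    exact mem_setOf_eq ▸ ⟨le_trans hc hq1.le, h q hq1⟩

lemma LevyCtx.measurable_T' {G : Set Ω} (hGm : MeasurableSet G)
    (hG : ∀ ω ∈ G, (Monotone fun t => S.Xp t ω)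
      ∧ (∀ t : ℝ, ContinuousWithinAt (fun s => S.Xp s ω) (Ici t) t)
      ∧ Tendsto (fun t => S.Xp t ω) atTop atTop ∧ 0 < S.X0 ω) :
    Measurable (((univ : Set ℝ) ×ˢ G).indicator (fun p : ℝ × Ω => S.T p.1 p.2)) := by
  apply measurable_of_Iic
  intro c
  rcases lt_or_ge c 0 with hc | hc
  · have hemp : ((univ : Set ℝ) ×ˢ G).indicator (fun p : ℝ × Ω => S.T p.1 p.2) ⁻¹' Iic c
        = ∅ := by
      ext p
      simp only [mem_preimage, mem_Iic, mem_empty_iff_false, iff_false, not_le]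
      by_cases hp : p ∈ (univ : Set ℝ) ×ˢ G
      · rw [Set.indicator_of_mem hp]
        exact lt_of_lt_of_le hc (S.T_nonneg p.1 p.2)
      · rw [Set.indicator_of_notMem hp]
        exact hc
    rw [hemp]
    exact MeasurableSet.empty
  · have heq : ((univ : Set ℝ) ×ˢ G).indicator (fun p : ℝ × Ω => S.T p.1 p.2) ⁻¹' Iic c
        = ((univ : Set ℝ) ×ˢ Gᶜ) ∪
          ((⋂ q : ℚ, {p : ℝ × Ω | c < (q:ℝ) → p.1 < S.X0 p.2 + S.Xp (q:ℝ) p.2})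
            ∩ (univ : Set ℝ) ×ˢ G) := by
      ext p
      simp only [mem_preimage, mem_Iic, mem_union, mem_prod, mem_univ, true_and,
        mem_compl_iff, mem_inter_iff, mem_iInter, mem_setOf_eq]
      by_cases hp : p.2 ∈ G
      · obtain ⟨hm, hr, ht, h0⟩ := hG p.2 hp
        rw [Set.indicator_of_mem (mem_prod.2 ⟨mem_univ _, hp⟩)]
        simp only [hp, not_true_eq_false, false_or, and_true]
        exact S.T_le_iff hm ht hc
      · rw [Set.indicator_of_notMem (fun hm => hp hm.2)]
        simp [hp, hc]
    rw [heq]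
    refine MeasurableSet.union (MeasurableSet.univ.prod hGm.compl)
      (MeasurableSet.inter ?_ (MeasurableSet.univ.prod hGm))
    refine MeasurableSet.iInter fun q => ?_
    rcases lt_or_ge c (q:ℝ) with h | h
    · have h2 : {p : ℝ × Ω | c < (q:ℝ) → p.1 < S.X0 p.2 + S.Xp (q:ℝ) p.2}
          = {p : ℝ × Ω | p.1 < S.X0 p.2 + S.Xp (q:ℝ) p.2} := by
        ext p; simp [h]
      rw [h2]
      exact measurableSet_lt measurable_fst ((S.X0_meas.add (S.Xp_meas _)).comp measurable_snd)
    · have h2 : {p : ℝ × Ω | c < (q:ℝ) → p.1 < S.X0 p.2 + S.Xp (q:ℝ) p.2} = univ := by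
        ext p
        simp only [mem_setOf_eq, mem_univ, iff_true]
        intro hcq
        exact absurd hcq (not_lt.2 h)
      rw [h2]
      exact MeasurableSet.univ

lemma LevyCtx.Xp_nonneg_ae {t : ℝ} (ht : 0 ≤ t) : ∀ᵐ ω ∂(ℙ : Measure Ω), 0 ≤ S.Xp t ω := by
  filter_upwards [S.Xp_mono] with ω hm
  have h := hm ht
  simpa [S.Xp_zero ω] using h

lemma LevyCtx.X0_laplace {u : ℝ} (hu : 0 < u) :
    ∫ ω, Real.exp (-(u * S.X0 ω)) = S.Phi u / (S.μ * u) := by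
  rw [integral_eq_lintegral_of_nonneg_ae (f := fun ω => Real.exp (-(u * S.X0 ω)))
    (ae_of_all _ fun ω => (Real.exp_pos _).le)
    ((Real.measurable_exp.comp ((S.X0_meas.const_mul u).neg)).aestronglyMeasurable),
    S.X0_laplace_lintegral hu,
    ENNReal.toReal_ofReal (div_nonneg (S.phi_pos hu).le (mul_pos S.mu_pos hu).le)]

lemma LevyCtx.Et {u : ℝ} (hu : 0 < u) {t : ℝ} (ht : 0 ≤ t) :
    ∫ ω, Real.exp (-(u * (S.X0 ω + S.Xp t ω)))
      = (S.Phi u / (S.μ * u)) * Real.exp (-(t * S.Phi u)) := by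
  haveI := S.prob
  have h1 : IndepFun S.X0 (S.Xp t) (ℙ : Measure Ω) :=
    S.X0_indep.comp measurable_id (measurable_pi_apply t)
  have h2 : IndepFun (fun ω => Real.exp (-(u * S.X0 ω)))
      (fun ω => Real.exp (-(u * S.Xp t ω))) (ℙ : Measure Ω) :=
    h1.comp (Real.measurable_exp.comp ((measurable_id.const_mul u).neg))
      (Real.measurable_exp.comp ((measurable_id.const_mul u).neg))
  have heq : (fun ω => Real.exp (-(u * (S.X0 ω + S.Xp t ω))))
      = (fun ω => Real.exp (-(u * S.X0 ω))) * (fun ω => Real.exp (-(u * S.Xp t ω))) := by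
    funext ω
    rw [Pi.mul_apply, ← Real.exp_add]
    congr 1
    ring
  rw [heq, h2.integral_mul_eq_mul_integral
    ((Real.measurable_exp.comp ((S.X0_meas.const_mul u).neg)).aestronglyMeasurable)
    ((Real.measurable_exp.comp (((S.Xp_meas t).const_mul u).neg)).aestronglyMeasurable)]
  rw [S.X0_laplace hu, S.Xp_laplace u hu.le t ht]
  rfl

lemma LevyCtx.Et_integrable {u t : ℝ} (hu : 0 ≤ u) (ht : 0 ≤ t) :
    Integrable (fun ω => Real.exp (-(u * (S.X0 ω + S.Xp t ω)))) (ℙ : Measure Ω) := by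
  haveI := S.prob
  refine Integrable.mono' (integrable_const 1)
    ((Real.measurable_exp.comp (((S.X0_meas.add (S.Xp_meas t)).const_mul u).neg)).aestronglyMeasurable)
    ?_
  filter_upwards [S.X0_pos, S.Xp_nonneg_ae ht] with ω h0 hp
  rw [Real.norm_eq_abs, abs_of_pos (Real.exp_pos _)]
  rw [Real.exp_le_one_iff]
  nlinarith [mul_nonneg hu (add_nonneg h0.le hp)]

lemma LevyCtx.Et_lintegral {u : ℝ} (hu : 0 < u) {t : ℝ} (ht : 0 ≤ t) :
    ∫⁻ ω, ENNReal.ofReal (Real.exp (-(u * (S.X0 ω + S.Xp t ω)))) ∂(ℙ : Measure Ω)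
      = ENNReal.ofReal ((S.Phi u / (S.μ * u)) * Real.exp (-(t * S.Phi u))) := by
  rw [← ofReal_integral_eq_lintegral_ofReal (S.Et_integrable hu.le ht)
    (ae_of_all _ fun ω => (Real.exp_pos _).le), S.Et hu ht]

end TLemmas

section MainProof
variable {Ω : Type} [MeasureSpace Ω] (S : LevyCtx Ω)

theorem double_transform_T_ne {u θ : ℝ} (hu : 0 < u) (hθ : θ < S.Phi u) (hθ0 : θ ≠ 0) :
    (∫ x in Set.Ioi (0:ℝ), u * Real.exp (-(u * x)) * ∫ ω, Real.exp (θ * S.T x ω))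
      = 1 + (θ / (S.Phi u - θ)) * (S.Phi u / (S.μ * u)) := by
  haveI := S.prob
  have hae4 : ∀ᵐ ω ∂(ℙ : Measure Ω), (Monotone fun t => S.Xp t ω)
      ∧ (∀ t : ℝ, ContinuousWithinAt (fun s => S.Xp s ω) (Ici t) t)
      ∧ Tendsto (fun t => S.Xp t ω) atTop atTop ∧ 0 < S.X0 ω := by
    filter_upwards [S.Xp_mono, S.Xp_rc, S.Xp_top, S.X0_pos] with ω h1 h2 h3 h4
    exact ⟨h1, h2, h3, h4⟩
  obtain ⟨G, hGm, hGc, hG⟩ := exists_good_of_ae (ℙ : Measure Ω) hae4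
  have hGae : ∀ᵐ ω ∂(ℙ : Measure Ω), ω ∈ G := by
    rw [MeasureTheory.ae_iff]
    exact hGc
  have hΦpos : 0 < S.Phi u := S.phi_pos hu
  have hΦθ : 0 < S.Phi u - θ := by linarith
  set Φ : ℝ := S.Phi u with hΦdef
  set c0 : ℝ := Φ / (S.μ * u) with hc0def
  have hc0nonneg : 0 ≤ c0 := div_nonneg hΦpos.le (mul_pos S.mu_pos hu).le
  set T' : ℝ × Ω → ℝ := ((univ : Set ℝ) ×ˢ G).indicator (fun p : ℝ × Ω => S.T p.1 p.2)
    with hT'def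
  have hT'm : Measurable T' := S.measurable_T' hGm hG
  have hT'eq : ∀ (x : ℝ) (ω : Ω), ω ∈ G → T' (x, ω) = S.T x ω := fun x ω hω =>
    Set.indicator_of_mem (mem_prod.2 ⟨mem_univ _, hω⟩) _
  set g : ℝ → Ω → ℝ := fun x ω => (Real.exp (θ * S.T x ω) - 1)/θ with hgdef
  have hT'nn : ∀ p : ℝ × Ω, 0 ≤ T' p := by
    intro p
    by_cases hp : p ∈ (univ : Set ℝ) ×ˢ G
    · rw [hT'def, Set.indicator_of_mem hp]
      exact S.T_nonneg _ _
    · rw [hT'def, Set.indicator_of_notMem hp]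
  have hgnn : ∀ x ω, 0 ≤ g x ω := by
    intro x ω
    rcases lt_or_gt_of_ne hθ0 with hneg | hpos
    · have h1 : Real.exp (θ * S.T x ω) ≤ 1 :=
        Real.exp_le_one_iff.2 (mul_nonpos_of_nonpos_of_nonneg hneg.le (S.T_nonneg x ω))
      exact div_nonneg_of_nonpos (by linarith) hneg.le
    · have h1 : 1 ≤ Real.exp (θ * S.T x ω) :=
        Real.one_le_exp (mul_nonneg hpos.le (S.T_nonneg x ω))
      exact div_nonneg (by linarith) hpos.le
  set L : ℝ → ℝ≥0∞ := fun x => ∫⁻ ω, ENNReal.ofReal (g x ω) ∂(ℙ : Measure Ω) with hLdef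
  have hkey : ∀ x ω, ENNReal.ofReal (g x ω)
      = ∫⁻ t in Ioi (0:ℝ), ENNReal.ofReal (Real.exp (θ*t))
          * (Iio (S.T x ω)).indicator (fun _ => 1) t := by
    intro x ω
    rw [key_t θ (S.T x ω) hθ0 (S.T_nonneg x ω)]
  have hLT' : ∀ x, L x = ∫⁻ ω, (∫⁻ t in Ioi (0:ℝ), ENNReal.ofReal (Real.exp (θ*t))
      * (Iio (T' (x, ω))).indicator (fun _ => 1) t) ∂(ℙ : Measure Ω) := by
    intro x
    refine lintegral_congr_ae ?_
    filter_upwards [hGae] with ω hω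
    rw [hkey x ω, hT'eq x ω hω]
  have hLmeas : Measurable L := by
    have hm1 : Measurable fun p : ℝ × Ω => ENNReal.ofReal ((Real.exp (θ * T' p) - 1)/θ) :=
      ENNReal.measurable_ofReal.comp
        (((Real.measurable_exp.comp (hT'm.const_mul θ)).sub measurable_const).div_const θ)
    have hL2 : L = fun x => ∫⁻ ω, ENNReal.ofReal ((Real.exp (θ * T' (x, ω)) - 1)/θ)
        ∂(ℙ : Measure Ω) := by
      funext x
      rw [hLT' x]
      refine lintegral_congr fun ω => ?_
      rw [key_t θ (T' (x, ω)) hθ0 (hT'nn (x, ω))]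
    rw [hL2]
    exact Measurable.lintegral_prod_right hm1
  -- pointwise bound on the indicator
  have hptbd : ∀ (x t : ℝ), 0 ≤ t → ∀ ω ∈ G,
      (Iio (S.T x ω)).indicator (fun _ => (1:ℝ≥0∞)) t
        ≤ ENNReal.ofReal (Real.exp (u*x))
          * ENNReal.ofReal (Real.exp (-(u*(S.X0 ω + S.Xp t ω)))) := by
    intro x t ht ω hω
    by_cases hlt : t < S.T x ω
    · rw [Set.indicator_of_mem (mem_Iio.2 hlt)]
      have hle := S.T_lt_imp ht hlt
      rw [← ENNReal.ofReal_mul (Real.exp_pos _).le, ← Real.exp_add]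
      refine ENNReal.one_le_ofReal.2 (Real.one_le_exp ?_)
      nlinarith [mul_nonneg hu.le (sub_nonneg.2 hle)]
    · rw [Set.indicator_of_notMem (fun hm => hlt (mem_Iio.1 hm))]
      exact zero_le
  have hexp_int : ∫⁻ t in Ioi (0:ℝ), ENNReal.ofReal (Real.exp (θ*t))
      * ENNReal.ofReal (c0 * Real.exp (-(t*Φ)))
      = ENNReal.ofReal c0 * ENNReal.ofReal (1/(Φ-θ)) := by
    have h1 : ∀ t : ℝ, ENNReal.ofReal (Real.exp (θ*t)) * ENNReal.ofReal (c0 * Real.exp (-(t*Φ)))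
        = ENNReal.ofReal c0 * ENNReal.ofReal (Real.exp (-((Φ-θ)*t))) := by
      intro t
      rw [← ENNReal.ofReal_mul (Real.exp_pos _).le, ← ENNReal.ofReal_mul hc0nonneg]
      congr 1
      rw [show Real.exp (θ*t) * (c0 * Real.exp (-(t*Φ)))
        = c0 * (Real.exp (θ*t) * Real.exp (-(t*Φ))) from by ring, ← Real.exp_add]
      congr 2
      ring
    simp only [h1]
    rw [lintegral_const_mul' _ _ ENNReal.ofReal_ne_top,
      lintegral_exp_neg_Ioi_zero (Φ-θ) hΦθ]
  have hinner_t : ∀ t : ℝ, 0 < t →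
      ∫⁻ ω, ENNReal.ofReal (Real.exp (θ*t))
        * ENNReal.ofReal (Real.exp (-(u*(S.X0 ω + S.Xp t ω)))) ∂(ℙ : Measure Ω)
      = ENNReal.ofReal (Real.exp (θ*t)) * ENNReal.ofReal (c0 * Real.exp (-(t*Φ))) := by
    intro t ht
    rw [lintegral_const_mul' _ _ ENNReal.ofReal_ne_top, S.Et_lintegral hu ht.le]
  have hswapx : ∀ x : ℝ, L x = ∫⁻ t in Ioi (0:ℝ),
      (∫⁻ ω, ENNReal.ofReal (Real.exp (θ*t))
        * (Iio (T' (x, ω))).indicator (fun _ => 1) t ∂(ℙ : Measure Ω)) := by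
    intro x
    rw [hLT' x]
    refine lintegral_lintegral_swap (Measurable.aemeasurable ?_)
    refine Measurable.mul (by fun_prop) ?_
    have hset : MeasurableSet {p : Ω × ℝ | p.2 < T' (x, p.1)} :=
      measurableSet_lt measurable_snd (hT'm.comp (measurable_const.prodMk measurable_fst))
    have heq2 : (fun p : Ω × ℝ => (Iio (T' (x, p.1))).indicator (fun _ => (1:ℝ≥0∞)) p.2)
        = {p : Ω × ℝ | p.2 < T' (x, p.1)}.indicator (fun _ => 1) := by
      funext p
      simp only [Set.indicator_apply, mem_Iio, mem_setOf_eq]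
    exact heq2 ▸ measurable_const.indicator hset
  have hLfin : ∀ x : ℝ, L x ≠ ⊤ := by
    intro x
    rw [hswapx x]
    have hb : ∫⁻ t in Ioi (0:ℝ), (∫⁻ ω, ENNReal.ofReal (Real.exp (θ*t))
        * (Iio (T' (x, ω))).indicator (fun _ => 1) t ∂(ℙ : Measure Ω))
        ≤ ∫⁻ t in Ioi (0:ℝ), ENNReal.ofReal (Real.exp (u*x))
          * (ENNReal.ofReal (Real.exp (θ*t)) * ENNReal.ofReal (c0 * Real.exp (-(t*Φ)))) := by
      refine setLIntegral_mono (by fun_prop) fun t ht => ?_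
      calc ∫⁻ ω, ENNReal.ofReal (Real.exp (θ*t))
            * (Iio (T' (x, ω))).indicator (fun _ => 1) t ∂(ℙ : Measure Ω)
          ≤ ∫⁻ ω, ENNReal.ofReal (Real.exp (θ*t)) * (ENNReal.ofReal (Real.exp (u*x))
              * ENNReal.ofReal (Real.exp (-(u*(S.X0 ω + S.Xp t ω))))) ∂(ℙ : Measure Ω) := by
            refine lintegral_mono_ae ?_
            filter_upwards [hGae] with ω hω
            refine mul_le_mul_right ?_ _
            rw [hT'eq x ω hω]
            exact hptbd x t (le_of_lt ht) ω hω
        _ = ENNReal.ofReal (Real.exp (θ*t)) * (ENNReal.ofReal (Real.exp (u*x))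
              * ENNReal.ofReal (c0 * Real.exp (-(t*Φ)))) := by
            rw [lintegral_const_mul' _ _ ENNReal.ofReal_ne_top,
              lintegral_const_mul' _ _ ENNReal.ofReal_ne_top,
              S.Et_lintegral hu (le_of_lt ht)]
        _ = ENNReal.ofReal (Real.exp (u*x)) * (ENNReal.ofReal (Real.exp (θ*t))
              * ENNReal.ofReal (c0 * Real.exp (-(t*Φ)))) := by ring
    refine ne_top_of_le_ne_top ?_ hb
    rw [lintegral_const_mul' _ _ ENNReal.ofReal_ne_top, hexp_int]
    exact ENNReal.mul_ne_top ENNReal.ofReal_ne_top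
      (ENNReal.mul_ne_top ENNReal.ofReal_ne_top ENNReal.ofReal_ne_top)
  have hgint : ∀ x : ℝ, Integrable (g x) (ℙ : Measure Ω) := by
    intro x
    have hsm : AEMeasurable (g x) (ℙ : Measure Ω) := by
      refine ⟨fun ω => (Real.exp (θ * T' (x, ω)) - 1)/θ, ?_, ?_⟩
      · exact ((Real.measurable_exp.comp ((hT'm.comp
          (measurable_const.prodMk measurable_id)).const_mul θ)).sub
            measurable_const).div_const θ
      · filter_upwards [hGae] with ω hω
        simp only [hgdef]
        rw [hT'eq x ω hω]
    refine ⟨hsm.aestronglyMeasurable, ?_⟩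
    rw [hasFiniteIntegral_iff_ofReal (ae_of_all _ fun ω => hgnn x ω)]
    exact Ne.lt_top (hLfin x)
  have hFx : ∀ x : ℝ, (∫ ω, Real.exp (θ * S.T x ω)) = 1 + θ * (L x).toReal := by
    intro x
    have hpt : (fun ω => Real.exp (θ * S.T x ω)) = fun ω => 1 + θ * g x ω := by
      funext ω
      simp only [hgdef]
      field_simp
      ring
    rw [hpt, integral_add (integrable_const 1) ((hgint x).const_mul θ), integral_const,
      probReal_univ, smul_eq_mul, one_mul, integral_const_mul]
    congr 1
    rw [integral_eq_lintegral_of_nonneg_ae (ae_of_all _ fun ω => hgnn x ω)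
      (hgint x).aestronglyMeasurable]
  have hLL : ∫⁻ x in Ioi (0:ℝ), ENNReal.ofReal (u * Real.exp (-(u*x))) * L x
      = ENNReal.ofReal (c0 * (1/(Φ-θ))) := by
    -- F x ω t
    have hmF : Measurable fun q : (ℝ × ℝ) × Ω =>
        ENNReal.ofReal (u * Real.exp (-(u*q.1.1))) * (ENNReal.ofReal (Real.exp (θ*q.1.2))
          * (Iio (T' (q.1.1, q.2))).indicator (fun _ => 1) q.1.2) := by
      refine Measurable.mul (by fun_prop) (Measurable.mul (by fun_prop) ?_)
      have heq2 : (fun q : (ℝ × ℝ) × Ω => (Iio (T' (q.1.1, q.2))).indicator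
          (fun _ => (1:ℝ≥0∞)) q.1.2)
          = {q : (ℝ × ℝ) × Ω | q.1.2 < T' (q.1.1, q.2)}.indicator (fun _ => 1) := by
        funext q
        simp only [Set.indicator_apply, mem_Iio, mem_setOf_eq]
      rw [heq2]
      exact measurable_const.indicator (measurableSet_lt measurable_fst.snd
        (hT'm.comp (measurable_fst.fst.prodMk measurable_snd)))
    have hstep1 : ∀ x : ℝ, ENNReal.ofReal (u * Real.exp (-(u*x))) * L x
        = ∫⁻ t in Ioi (0:ℝ), ∫⁻ ω, ENNReal.ofReal (u * Real.exp (-(u*x)))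
            * (ENNReal.ofReal (Real.exp (θ*t))
              * (Iio (T' (x, ω))).indicator (fun _ => 1) t) ∂(ℙ : Measure Ω) := by
      intro x
      rw [hswapx x, ← lintegral_const_mul' _ _ ENNReal.ofReal_ne_top]
      refine lintegral_congr fun t => ?_
      rw [← lintegral_const_mul' _ _ ENNReal.ofReal_ne_top]
    have hswap2 : ∫⁻ x in Ioi (0:ℝ), ∫⁻ t in Ioi (0:ℝ),
        (∫⁻ ω, ENNReal.ofReal (u * Real.exp (-(u*x))) * (ENNReal.ofReal (Real.exp (θ*t))
          * (Iio (T' (x, ω))).indicator (fun _ => 1) t) ∂(ℙ : Measure Ω)) ∂volume ∂volume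
        = ∫⁻ t in Ioi (0:ℝ), ∫⁻ x in Ioi (0:ℝ),
        (∫⁻ ω, ENNReal.ofReal (u * Real.exp (-(u*x))) * (ENNReal.ofReal (Real.exp (θ*t))
          * (Iio (T' (x, ω))).indicator (fun _ => 1) t) ∂(ℙ : Measure Ω)) ∂volume ∂volume := by
      refine lintegral_lintegral_swap (Measurable.aemeasurable ?_)
      exact Measurable.lintegral_prod_right (f := fun (p : ℝ × ℝ) (ω : Ω) =>
        ENNReal.ofReal (u * Real.exp (-(u*p.1))) * (ENNReal.ofReal (Real.exp (θ*p.2))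
          * (Iio (T' (p.1, ω))).indicator (fun _ => 1) p.2)) hmF
    have hswap3 : ∀ t : ℝ, ∫⁻ x in Ioi (0:ℝ),
        (∫⁻ ω, ENNReal.ofReal (u * Real.exp (-(u*x))) * (ENNReal.ofReal (Real.exp (θ*t))
          * (Iio (T' (x, ω))).indicator (fun _ => 1) t) ∂(ℙ : Measure Ω)) ∂volume
        = ∫⁻ ω, (∫⁻ x in Ioi (0:ℝ), ENNReal.ofReal (u * Real.exp (-(u*x)))
            * (ENNReal.ofReal (Real.exp (θ*t))
              * (Iio (T' (x, ω))).indicator (fun _ => 1) t) ∂volume) ∂(ℙ : Measure Ω) := by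
      intro t
      refine lintegral_lintegral_swap (Measurable.aemeasurable ?_)
      refine Measurable.mul (by fun_prop) (Measurable.mul (by fun_prop) ?_)
      have heq2 : (fun q : ℝ × Ω => (Iio (T' (q.1, q.2))).indicator (fun _ => (1:ℝ≥0∞)) t)
          = {q : ℝ × Ω | t < T' (q.1, q.2)}.indicator (fun _ => 1) := by
        funext q
        simp only [Set.indicator_apply, mem_Iio, mem_setOf_eq]
      rw [heq2]
      exact measurable_const.indicator (measurableSet_lt measurable_const hT'm)
    have hinner_x : ∀ t : ℝ, 0 < t → ∀ ω ∈ G,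
        ∫⁻ x in Ioi (0:ℝ), ENNReal.ofReal (u * Real.exp (-(u*x)))
          * (ENNReal.ofReal (Real.exp (θ*t))
            * (Iio (T' (x, ω))).indicator (fun _ => 1) t) ∂volume
        = ENNReal.ofReal (Real.exp (θ*t))
          * ENNReal.ofReal (Real.exp (-(u*(S.X0 ω + S.Xp t ω)))) := by
      intro t ht ω hω
      obtain ⟨hm, hr, htp, h0⟩ := hG ω hω
      have hXpnn : 0 ≤ S.Xp t ω := by
        have h2 := hm ht.le
        simpa [S.Xp_zero ω] using h2
      have hcnn : 0 ≤ S.X0 ω + S.Xp t ω := by linarith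
      have hrew : (fun x => ENNReal.ofReal (u * Real.exp (-(u*x)))
          * (ENNReal.ofReal (Real.exp (θ*t))
            * (Iio (T' (x, ω))).indicator (fun _ => (1:ℝ≥0∞)) t))
          = fun x => ENNReal.ofReal (Real.exp (θ*t))
            * (ENNReal.ofReal (u * Real.exp (-(u*x)))
              * ({x : ℝ | t < S.T x ω}).indicator (fun _ => 1) x) := by
        funext x
        rw [hT'eq x ω hω]
        simp only [Set.indicator_apply, mem_Iio, mem_setOf_eq]
        ring
      rw [hrew, lintegral_const_mul' _ _ ENNReal.ofReal_ne_top]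
      congr 1
      refine key_inner u (S.X0 ω + S.Xp t ω) hu hcnn ?_ ?_
      · intro x hx
        exact S.lt_T_of hm hr htp ht.le hx
      · intro x hx
        exact S.T_lt_imp ht.le hx
    calc ∫⁻ x in Ioi (0:ℝ), ENNReal.ofReal (u * Real.exp (-(u*x))) * L x
        = ∫⁻ x in Ioi (0:ℝ), ∫⁻ t in Ioi (0:ℝ),
            (∫⁻ ω, ENNReal.ofReal (u * Real.exp (-(u*x)))
              * (ENNReal.ofReal (Real.exp (θ*t))
                * (Iio (T' (x, ω))).indicator (fun _ => 1) t) ∂(ℙ : Measure Ω)) := by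
          exact lintegral_congr fun x => hstep1 x
      _ = ∫⁻ t in Ioi (0:ℝ), ∫⁻ x in Ioi (0:ℝ),
            (∫⁻ ω, ENNReal.ofReal (u * Real.exp (-(u*x)))
              * (ENNReal.ofReal (Real.exp (θ*t))
                * (Iio (T' (x, ω))).indicator (fun _ => 1) t) ∂(ℙ : Measure Ω)) := hswap2
      _ = ∫⁻ t in Ioi (0:ℝ), ENNReal.ofReal (Real.exp (θ*t))
            * ENNReal.ofReal (c0 * Real.exp (-(t*Φ))) := by
          refine setLIntegral_congr_fun measurableSet_Ioi (fun t ht => ?_)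
          rw [hswap3 t]
          rw [show (∫⁻ ω, (∫⁻ x in Ioi (0:ℝ), ENNReal.ofReal (u * Real.exp (-(u*x)))
            * (ENNReal.ofReal (Real.exp (θ*t))
              * (Iio (T' (x, ω))).indicator (fun _ => 1) t) ∂volume) ∂(ℙ : Measure Ω))
            = ∫⁻ ω, ENNReal.ofReal (Real.exp (θ*t))
              * ENNReal.ofReal (Real.exp (-(u*(S.X0 ω + S.Xp t ω)))) ∂(ℙ : Measure Ω) from
            lintegral_congr_ae (by
              filter_upwards [hGae] with ω hω
              exact hinner_x t ht ω hω)]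
          exact hinner_t t ht
      _ = ENNReal.ofReal c0 * ENNReal.ofReal (1/(Φ-θ)) := hexp_int
      _ = ENNReal.ofReal (c0 * (1/(Φ-θ))) := (ENNReal.ofReal_mul hc0nonneg).symm
  have hofm : ∀ x : ℝ, ENNReal.ofReal (u * Real.exp (-(u*x)) * (L x).toReal)
      = ENNReal.ofReal (u * Real.exp (-(u*x))) * L x := by
    intro x
    rw [ENNReal.ofReal_mul (by positivity), ENNReal.ofReal_toReal (hLfin x)]
  have hVnn : ∀ x : ℝ, 0 ≤ u * Real.exp (-(u*x)) * (L x).toReal := fun x =>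
    mul_nonneg (by positivity) ENNReal.toReal_nonneg
  have hVint : IntegrableOn (fun x => u * Real.exp (-(u*x)) * (L x).toReal) (Ioi 0) := by
    refine ⟨((by fun_prop : Measurable fun x : ℝ => u * Real.exp (-(u*x))).mul
      (ENNReal.measurable_toReal.comp hLmeas)).aestronglyMeasurable, ?_⟩
    rw [hasFiniteIntegral_iff_ofReal (ae_of_all _ fun x => hVnn x)]
    simp only [hofm]
    rw [hLL]
    exact ENNReal.ofReal_lt_top
  have hVval : ∫ x in Ioi (0:ℝ), u * Real.exp (-(u*x)) * (L x).toReal = c0 * (1/(Φ-θ)) := by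
    rw [integral_eq_lintegral_of_nonneg_ae (ae_of_all _ fun x => hVnn x)
      hVint.aestronglyMeasurable]
    simp only [hofm]
    rw [hLL, ENNReal.toReal_ofReal (mul_nonneg hc0nonneg (by positivity))]
  calc (∫ x in Set.Ioi (0:ℝ), u * Real.exp (-(u * x)) * ∫ ω, Real.exp (θ * S.T x ω))
      = ∫ x in Ioi (0:ℝ),
          (u * Real.exp (-(u*x)) + θ * (u * Real.exp (-(u*x)) * (L x).toReal)) := by
        refine integral_congr_ae (ae_of_all _ fun x => ?_)
        show u * Real.exp (-(u * x)) * (∫ ω, Real.exp (θ * S.T x ω))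
          = u * Real.exp (-(u*x)) + θ * (u * Real.exp (-(u*x)) * (L x).toReal)
        rw [hFx x]
        ring
    _ = (∫ x in Ioi (0:ℝ), u * Real.exp (-(u*x)))
          + θ * ∫ x in Ioi (0:ℝ), u * Real.exp (-(u*x)) * (L x).toReal := by
        rw [integral_add (integrable_cexp_Ioi u 0 hu) (hVint.const_mul θ)]
        simp only [integral_const_mul]
    _ = 1 + θ * (c0 * (1/(Φ-θ))) := by
        rw [integral_cexp_Ioi u 0 hu, hVval]
        norm_num
    _ = 1 + (θ / (S.Phi u - θ)) * (S.Phi u / (S.μ * u)) := by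
        rw [← hΦdef, ← hc0def]
        field_simp

end MainProof

/-- Double transform of the first passage time:
`∫_0^∞ u e^{-ux} E(e^{θ T_x}) dx = 1 + (θ/(Φ(u) - θ)) Φ(u)/(μu)`. -/
theorem double_transform_T {Ω : Type} [MeasureSpace Ω] (S : LevyCtx Ω)
    (u θ : ℝ) (hu : 0 < u) (hθ : θ < S.Phi u) :
    (∫ x in Set.Ioi (0:ℝ), u * Real.exp (-(u * x)) * ∫ ω, Real.exp (θ * S.T x ω))
      = 1 + (θ / (S.Phi u - θ)) * (S.Phi u / (S.μ * u)) := by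
  rcases eq_or_ne θ 0 with rfl | hθ0
  · haveI := S.prob
    have hT1 : ∀ x : ℝ, (∫ ω, Real.exp ((0:ℝ) * S.T x ω)) = 1 := by
      intro x
      simp [measure_univ]
    have h2 : (∫ x in Set.Ioi (0:ℝ), u * Real.exp (-(u * x)) * ∫ ω, Real.exp (0 * S.T x ω))
        = ∫ x in Ioi (0:ℝ), u * Real.exp (-(u*x)) := by
      refine integral_congr_ae (ae_of_all _ fun x => ?_)
      show u * Real.exp (-(u * x)) * (∫ ω, Real.exp (0 * S.T x ω))
        = u * Real.exp (-(u*x))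
      rw [hT1 x, mul_one]
    rw [h2, integral_cexp_Ioi u 0 hu]
    norm_num
  · exact double_transform_T_ne S hu hθ hθ0
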